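/- Let m ≥ 1 and for i = 1,…,m let y^i, ȳ^i : [0,T] → ℝ be C¹ functions satisfying (y^i)'(t) = -[F^i(t, y^i(t), y^{-i}(t))] and (ȳ^i)'(t) = -[F̄^i(t, ȳ^i(t), ȳ^{-i}(t))], with y^i(T) ≤ ȳ^i(T). Assume each F^i(t, ·) is Lipschitz, nondecreasing in y^k for every k ≠ i, and F^i(t, ȳ^i(t), ȳ^{-i}(t)) ≤ F̄^i(t, ȳ^i(t), ȳ^{-i}(t)) for all t. Then y^i(t) ≤ ȳ^i(t) for all t ∈ [0,T] and all i. -/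

import Mathlib

open Real

/-- The function `x ↦ ((x)⁺)²` is differentiable with derivative `2 x⁺`. -/
lemma hasDerivAt_posPart_sq (x : ℝ) :
    HasDerivAt (fun x : ℝ => (max x 0) ^ 2) (2 * max x 0) x := by
  rcases lt_trichotomy x 0 with hx | hx | hx
  · have hev : (fun x : ℝ => (max x 0) ^ 2) =ᶠ[nhds x] fun _ => (0 : ℝ) := by
      filter_upwards [Iio_mem_nhds hx] with z hz
      have hz' : z < 0 := hz
      simp [max_eq_right hz'.le]
    have h0 : HasDerivAt (fun _ : ℝ => (0 : ℝ)) 0 x := hasDerivAt_const x 0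
    have := h0.congr_of_eventuallyEq hev
    simpa [max_eq_right (le_of_lt hx)] using this
  · subst hx
    rw [hasDerivAt_iff_isLittleO, Asymptotics.isLittleO_iff]
    intro c hc
    filter_upwards [Metric.ball_mem_nhds (0 : ℝ) hc] with z hz
    simp only [Metric.mem_ball, Real.dist_eq, sub_zero] at hz
    have h1 : (max z 0) ^ 2 ≤ |z| * |z| := by
      rcases le_or_gt z 0 with h | h
      · rw [max_eq_right h]
        simpa using mul_nonneg (abs_nonneg z) (abs_nonneg z)
      · rw [max_eq_left h.le, abs_of_pos h]
        nlinarith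
    have h2 : ‖(max z 0) ^ 2‖ ≤ c * ‖z‖ := by
      rw [Real.norm_eq_abs, Real.norm_eq_abs,
        abs_of_nonneg (by positivity : (0:ℝ) ≤ (max z 0) ^ 2)]
      calc (max z 0) ^ 2 ≤ |z| * |z| := h1
        _ ≤ c * |z| := by nlinarith [abs_nonneg z]
    simpa using h2
  · have hev : (fun x : ℝ => (max x 0) ^ 2) =ᶠ[nhds x] fun z => z ^ 2 := by
      filter_upwards [Ioi_mem_nhds hx] with z hz
      simp [max_eq_left (le_of_lt (Set.mem_Ioi.1 hz))]
    have h0 : HasDerivAt (fun z : ℝ => z ^ 2) (2 * x) x := by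
      simpa using hasDerivAt_pow 2 x
    have := h0.congr_of_eventuallyEq hev
    simpa [max_eq_left (le_of_lt hx)] using this

/-- Deterministic (ODE) multidimensional comparison theorem: quasi-monotone drivers,
terminal comparison, and driver comparison along the solution `ȳ` imply `y ≤ ȳ`. -/
theorem stmt_18 (m : ℕ) (hm : 1 ≤ m) (T : ℝ) (hT : 0 < T)
    (y ybar : Fin m → ℝ → ℝ)
    (F Fbar : Fin m → ℝ → (Fin m → ℝ) → ℝ)
    (Cg : ℝ)
    (hLip : ∀ i t, t ∈ Set.Icc (0 : ℝ) T → ∀ u v : Fin m → ℝ,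
      |F i t u - F i t v| ≤ Cg * ∑ k, |u k - v k|)
    (hmono : ∀ i t, t ∈ Set.Icc (0 : ℝ) T → ∀ u v : Fin m → ℝ,
      u i = v i → (∀ k, u k ≤ v k) → F i t u ≤ F i t v)
    (hy : ∀ i, ∀ t ∈ Set.Icc (0 : ℝ) T,
      HasDerivWithinAt (y i) (-(F i t fun k => y k t)) (Set.Icc 0 T) t)
    (hybar : ∀ i, ∀ t ∈ Set.Icc (0 : ℝ) T,
      HasDerivWithinAt (ybar i) (-(Fbar i t fun k => ybar k t)) (Set.Icc 0 T) t)
    (hterm : ∀ i, y i T ≤ ybar i T)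
    (hcomp : ∀ i, ∀ t ∈ Set.Icc (0 : ℝ) T,
      F i t (fun k => ybar k t) ≤ Fbar i t fun k => ybar k t) :
    ∀ i, ∀ t ∈ Set.Icc (0 : ℝ) T, y i t ≤ ybar i t := by
  set C : ℝ := max Cg 0 with hC
  have hC0 : 0 ≤ C := le_max_right _ _
  set K : ℝ := 2 * m * C with hKdef
  have hK0 : 0 ≤ K := by positivity
  -- positive parts
  have ha0 : ∀ (i : Fin m) (t : ℝ), 0 ≤ max (y i t - ybar i t) 0 := fun i t => le_max_right _ _
  -- the Lyapunov function φ and its derivative φ'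
  set φ : ℝ → ℝ := fun t => ∑ i, (max (y i t - ybar i t) 0) ^ 2 with hφdef
  have hφ0 : ∀ t, 0 ≤ φ t := fun t => Finset.sum_nonneg fun i _ => sq_nonneg _
  set φ' : ℝ → ℝ := fun t => ∑ i, 2 * max (y i t - ybar i t) 0 *
      ((-(F i t fun k => y k t)) - (-(Fbar i t fun k => ybar k t))) with hφ'def
  have hφderiv : ∀ t ∈ Set.Icc (0 : ℝ) T, HasDerivWithinAt φ (φ' t) (Set.Icc 0 T) t := by
    intro t ht
    apply HasDerivWithinAt.fun_sum
    intro i _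
    have hd : HasDerivWithinAt (fun s => y i s - ybar i s)
        ((-(F i t fun k => y k t)) - (-(Fbar i t fun k => ybar k t))) (Set.Icc 0 T) t :=
      (hy i t ht).sub (hybar i t ht)
    have := (hasDerivAt_posPart_sq (y i t - ybar i t)).comp_hasDerivWithinAt t hd
    simpa [mul_assoc, Function.comp_def] using this
  -- the key differential inequality
  have hkey : ∀ t ∈ Set.Icc (0 : ℝ) T, -φ' t ≤ K * φ t := by
    intro t ht
    set S : ℝ := ∑ k, max (y k t - ybar k t) 0 with hSdef
    have hS0 : 0 ≤ S := Finset.sum_nonneg fun k _ => ha0 k t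
    have hper : ∀ i : Fin m,
        -(2 * C * (max (y i t - ybar i t) 0 * S)) ≤ 2 * max (y i t - ybar i t) 0 *
          ((-(F i t fun k => y k t)) - (-(Fbar i t fun k => ybar k t))) := by
      intro i
      rcases eq_or_lt_of_le (ha0 i t) with h | h
      · rw [← h]; simp
      · have hpos : 0 < y i t - ybar i t := by
          by_contra hcon
          push_neg at hcon
          rw [max_eq_right hcon] at h
          exact lt_irrefl _ h
        have hai : max (y i t - ybar i t) 0 = y i t - ybar i t := max_eq_left hpos.le
        -- the quasi-monotone comparison vector
        set z : Fin m → ℝ := fun k => if k = i then y i t else max (y k t) (ybar k t) with hz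
        have h1 : F i t (fun k => y k t) ≤ F i t z := by
          apply hmono i t ht
          · simp [hz]
          · intro k
            by_cases hk : k = i
            · subst hk; simp [hz]
            · simp only [hz, if_neg hk]
              exact le_max_left _ _
        have h2 : |F i t z - F i t (fun k => ybar k t)| ≤ Cg * ∑ k, |z k - ybar k t| :=
          hLip i t ht z _
        have h3 : ∀ k, |z k - ybar k t| = max (y k t - ybar k t) 0 := by
          intro k
          by_cases hk : k = i
          · subst hk
            simp only [hz, if_pos rfl]
            rw [abs_of_pos hpos, hai]
          · simp only [hz, if_neg hk]
            rcases le_total (y k t) (ybar k t) with hle | hle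
            · rw [max_eq_right hle, max_eq_right (sub_nonpos.2 hle)]
              simp
            · rw [max_eq_left hle, max_eq_left (sub_nonneg.2 hle),
                abs_of_nonneg (sub_nonneg.2 hle)]
        have h4 : ∑ k, |z k - ybar k t| = S := by
          rw [hSdef]; exact Finset.sum_congr rfl fun k _ => h3 k
        have h5 : F i t z - F i t (fun k => ybar k t) ≤ C * S := by
          have := (abs_le.1 h2).2
          rw [h4] at this
          calc F i t z - F i t (fun k => ybar k t) ≤ Cg * S := this
            _ ≤ C * S := mul_le_mul_of_nonneg_right (le_max_left _ _) hS0
        have h6 : F i t (fun k => ybar k t) ≤ Fbar i t (fun k => ybar k t) := hcomp i t ht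
        have h7 : -(C * S) ≤ (-(F i t fun k => y k t)) - (-(Fbar i t fun k => ybar k t)) := by
          have : F i t (fun k => y k t) ≤ F i t z := h1
          linarith
        nlinarith [ha0 i t, mul_le_mul_of_nonneg_left h7 (mul_nonneg (by norm_num : (0:ℝ) ≤ 2) (ha0 i t))]
    have hsum : -(2 * C * (S * S)) ≤ φ' t := by
      have e : ∑ i, -(2 * C * (max (y i t - ybar i t) 0 * S)) = -(2 * C * (S * S)) := by
        calc ∑ i, -(2 * C * (max (y i t - ybar i t) 0 * S))
            = ∑ i, (-(2 * C * S)) * max (y i t - ybar i t) 0 :=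
              Finset.sum_congr rfl fun i _ => by ring
          _ = (-(2 * C * S)) * ∑ i, max (y i t - ybar i t) 0 := (Finset.mul_sum _ _ _).symm
          _ = -(2 * C * (S * S)) := by rw [← hSdef]; ring
      have hle : ∑ i, -(2 * C * (max (y i t - ybar i t) 0 * S)) ≤ φ' t :=
        Finset.sum_le_sum fun i _ => hper i
      linarith [e ▸ hle]
    have hcs : S ^ 2 ≤ (m : ℝ) * φ t := by
      have := sq_sum_le_card_mul_sum_sq (s := Finset.univ)
        (f := fun k => max (y k t - ybar k t) 0)
      simpa [hSdef, hφdef] using this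
    have hfin : 2 * C * (S * S) ≤ K * φ t := by
      have : S * S = S ^ 2 := (sq S).symm
      rw [this, hKdef]
      nlinarith [hφ0 t]
    linarith
  -- the reversed-time function ψ and its exponential damping g
  have hψderiv : ∀ s ∈ Set.Icc (0 : ℝ) T,
      HasDerivWithinAt (fun s => φ (T - s)) (-(φ' (T - s))) (Set.Icc 0 T) s := by
    intro s hs
    have hmem : T - s ∈ Set.Icc (0 : ℝ) T := ⟨by linarith [hs.2], by linarith [hs.1]⟩
    have hinner : HasDerivWithinAt (fun x : ℝ => T - x) (-1) (Set.Icc 0 T) s := by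
      simpa using (hasDerivWithinAt_id s (Set.Icc (0:ℝ) T)).const_sub T
    have hmaps : Set.MapsTo (fun x : ℝ => T - x) (Set.Icc 0 T) (Set.Icc 0 T) := by
      intro x hx
      simp only [Set.mem_Icc] at hx ⊢
      constructor <;> linarith [hx.1, hx.2]
    have := (hφderiv (T - s) hmem).comp s hinner hmaps
    simpa [Function.comp_def] using this
  set g : ℝ → ℝ := fun s => φ (T - s) * Real.exp (-K * s) with hgdef
  have hexp : ∀ s : ℝ, HasDerivAt (fun s : ℝ => Real.exp (-K * s))
      (Real.exp (-K * s) * (-K)) s := by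
    intro s
    have h1 : HasDerivAt (fun s : ℝ => -K * s) (-K) s := by
      simpa using (hasDerivAt_id s).const_mul (-K)
    simpa [Function.comp_def] using (Real.hasDerivAt_exp (-K * s)).comp s h1
  have hgderiv : ∀ s ∈ Set.Icc (0 : ℝ) T, HasDerivWithinAt g
      ((-(φ' (T - s))) * Real.exp (-K * s) + φ (T - s) * (Real.exp (-K * s) * (-K)))
      (Set.Icc 0 T) s := by
    intro s hs
    exact (hψderiv s hs).mul ((hexp s).hasDerivWithinAt)
  have hgcont : ContinuousOn g (Set.Icc 0 T) := fun s hs =>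
    (hgderiv s hs).continuousWithinAt
  have hganti : AntitoneOn g (Set.Icc 0 T) := by
    apply antitoneOn_of_deriv_nonpos (convex_Icc 0 T) hgcont
    · intro x hx
      rw [interior_Icc] at hx
      have hnhds : Set.Icc (0:ℝ) T ∈ nhds x := Icc_mem_nhds hx.1 hx.2
      exact ((hgderiv x (Set.Ioo_subset_Icc_self hx)).hasDerivAt hnhds).differentiableAt.differentiableWithinAt
    · intro x hx
      rw [interior_Icc] at hx
      have hnhds : Set.Icc (0:ℝ) T ∈ nhds x := Icc_mem_nhds hx.1 hx.2
      have hdg := (hgderiv x (Set.Ioo_subset_Icc_self hx)).hasDerivAt hnhds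
      rw [hdg.deriv]
      have hmem : T - x ∈ Set.Icc (0:ℝ) T := ⟨by linarith [hx.2], by linarith [hx.1]⟩
      have hk := hkey (T - x) hmem
      have hE : 0 < Real.exp (-K * x) := Real.exp_pos _
      nlinarith [mul_le_mul_of_nonneg_right hk hE.le]
  -- terminal value
  have hφT : φ T = 0 := by
    rw [hφdef]
    apply Finset.sum_eq_zero
    intro i _
    rw [max_eq_right (sub_nonpos.2 (hterm i))]
    ring
  have hg0 : g 0 = 0 := by
    simp [hgdef, hφT]
  -- conclusion
  have hφle : ∀ t ∈ Set.Icc (0 : ℝ) T, φ t = 0 := by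
    intro t ht
    have hs : T - t ∈ Set.Icc (0:ℝ) T := ⟨by linarith [ht.2], by linarith [ht.1]⟩
    have h0mem : (0:ℝ) ∈ Set.Icc (0:ℝ) T := ⟨le_refl _, hT.le⟩
    have := hganti h0mem hs hs.1
    rw [hg0] at this
    have hgs : φ (T - (T - t)) * Real.exp (-K * (T - t)) ≤ 0 := this
    have hTt : T - (T - t) = t := by ring
    rw [hTt] at hgs
    have hE : 0 < Real.exp (-K * (T - t)) := Real.exp_pos _
    have : φ t ≤ 0 := by nlinarith [hφ0 t]
    linarith [hφ0 t]
  intro i t ht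
  have h0 := hφle t ht
  rw [hφdef] at h0
  have := (Finset.sum_eq_zero_iff_of_nonneg (fun k _ => sq_nonneg
      (max (y k t - ybar k t) 0))).1 h0 i (Finset.mem_univ i)
  have hmax : max (y i t - ybar i t) 0 = 0 := by
    nlinarith [ha0 i t]
  have : y i t - ybar i t ≤ 0 := by
    by_contra hcon
    push_neg at hcon
    rw [max_eq_left hcon.le] at hmax
    linarith
  linarith
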